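/- arXiv:2312.14362 — 7 statements merged into one kernel-verified Lean document; each statement's English description precedes it below -/
import Mathlib

section
/- Let H be a real Hilbert space, r > 0, and let rB = {z ∈ H : ‖z‖ ≤ r} be the closed ball of radius r centered at the origin, with metric projection P_{rB}. Then P_{rB} is strictly Fréchet differentiable at every point x̄ ∈ H with ‖x̄‖ > r, and its strict Fréchet derivative there is the continuous linear map x ↦ (r/‖x̄‖)·(x − (⟨x, x̄⟩/‖x̄‖²)·x̄). That is, (P_{rB}(u) − P_{rB}(v) − (r/‖x̄‖)·((u − v) − (⟨u − v, x̄⟩/‖x̄‖²)·x̄))/‖u − v‖ → 0 as u → x̄ and v → x̄ with u ≠ v. -/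
open Filter Topology Metric Set
open scoped RealInnerProductSpace

/-- The metric projection onto the closed ball `rB` of radius `r > 0` centered at the
origin of a real Hilbert space is strictly Fréchet differentiable at every point `xb`
with `‖xb‖ > r`, with strict Fréchet derivative
`x ↦ (r/‖xb‖) • (x - (⟨x, xb⟩/‖xb‖²) • xb)`. -/
theorem strictFrechet_proj_closedBall_outside {H : Type*} [NormedAddCommGroup H]
    [InnerProductSpace ℝ H] [CompleteSpace H] (r : ℝ) (hr : 0 < r)
    (P : H → H)
    (hP : ∀ x, P x ∈ Metric.closedBall (0 : H) r ∧
      ∀ z ∈ Metric.closedBall (0 : H) r, ‖x - P x‖ ≤ ‖x - z‖)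
    (xb : H) (hxb : r < ‖xb‖) :
    Filter.Tendsto (fun p : H × H =>
        ‖p.1 - p.2‖⁻¹ • (P p.1 - P p.2 -
          (r / ‖xb‖) • ((p.1 - p.2) - ((inner ℝ (p.1 - p.2) xb : ℝ) / ‖xb‖ ^ 2) • xb)))
      (𝓝[{p : H × H | p.1 ≠ p.2}] (xb, xb)) (𝓝 0) := by
  have hB : Convex ℝ (Metric.closedBall (0 : H) r) := convex_closedBall 0 r
  -- Step 1: explicit formula for P outside the ball
  have key : ∀ x : H, r < ‖x‖ → P x = (r / ‖x‖) • x := by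
    intro x hx
    have hx0 : (0:ℝ) < ‖x‖ := lt_trans hr hx
    set y : H := (r / ‖x‖) • x with hy_def
    have hyn : ‖y‖ = r := by
      rw [hy_def, norm_smul, Real.norm_eq_abs, abs_of_pos (div_pos hr hx0)]
      field_simp
    have hy_mem : y ∈ Metric.closedBall (0 : H) r := by
      simpa [Metric.mem_closedBall, dist_eq_norm] using hyn.le
    have hxy : ‖x - y‖ = ‖x‖ - r := by
      have : x - y = (1 - r / ‖x‖) • x := by
        rw [hy_def, sub_smul, one_smul]
      rw [this, norm_smul, Real.norm_eq_abs,
        abs_of_nonneg (by rw [sub_nonneg]; exact (div_le_one hx0).2 hx.le)]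
      field_simp
    have hy_min : ∀ z ∈ Metric.closedBall (0 : H) r, ‖x - y‖ ≤ ‖x - z‖ := by
      intro z hz
      have hz' : ‖z‖ ≤ r := by simpa [Metric.mem_closedBall, dist_eq_norm] using hz
      calc ‖x - y‖ = ‖x‖ - r := hxy
        _ ≤ ‖x‖ - ‖z‖ := by linarith
        _ ≤ ‖x - z‖ := norm_sub_norm_le _ _
    -- both P x and y satisfy the variational inequality
    have bdd : BddBelow (Set.range fun w : Metric.closedBall (0:H) r => ‖x - (w : H)‖) :=
      ⟨0, by rintro b ⟨w, rfl⟩; exact norm_nonneg _⟩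
    have hinf : ∀ v : H, v ∈ Metric.closedBall (0 : H) r →
        (∀ z ∈ Metric.closedBall (0 : H) r, ‖x - v‖ ≤ ‖x - z‖) →
        ∀ w ∈ Metric.closedBall (0 : H) r, (inner ℝ (x - v) (w - v) : ℝ) ≤ 0 := by
      intro v hv hmin
      haveI : Nonempty (Metric.closedBall (0:H) r) := ⟨⟨0, by simp [hr.le]⟩⟩
      have : ‖x - v‖ = ⨅ w : Metric.closedBall (0:H) r, ‖x - (w : H)‖ :=
        le_antisymm (le_ciInf fun w => hmin w w.2) (ciInf_le bdd ⟨v, hv⟩)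
      exact (norm_eq_iInf_iff_real_inner_le_zero hB hv).1 this
    have h1 := hinf (P x) (hP x).1 (hP x).2 y hy_mem
    have h2 := hinf y hy_mem hy_min (P x) (hP x).1
    have hsq : (inner ℝ (y - P x) (y - P x) : ℝ) ≤ 0 := by
      have e : y - P x = (x - P x) - (x - y) := by abel
      calc (inner ℝ (y - P x) (y - P x) : ℝ) = (inner ℝ (x - P x) (y - P x) : ℝ) - (inner ℝ (x - y) (y - P x) : ℝ) := by
            rw [e, inner_sub_left]
        _ = (inner ℝ (x - P x) (y - P x) : ℝ) + (inner ℝ (x - y) (P x - y) : ℝ) := by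
            rw [show P x - y = -(y - P x) from by rw [neg_sub], inner_neg_right]; ring
        _ ≤ 0 := add_nonpos h1 h2
    have : y - P x = 0 := by
      have := le_antisymm hsq (real_inner_self_nonneg)
      exact inner_self_eq_zero.1 this
    exact (sub_eq_zero.1 this).symm
  -- Step 2: strict differentiability of x ↦ (r/‖x‖) • x at xb
  have hxb0 : (0:ℝ) < ‖xb‖ := lt_trans hr hxb
  have hxbne : ‖xb‖ ≠ 0 := ne_of_gt hxb0
  have hnormsq : HasStrictFDerivAt (fun x : H => ‖x‖ ^ 2) (2 • (innerSL ℝ xb)) xb :=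
    hasStrictFDerivAt_norm_sq xb
  have hnorm : HasStrictFDerivAt (fun x : H => ‖x‖)
      ((1 / (2 * Real.sqrt (‖xb‖ ^ 2))) • (2 • (innerSL ℝ xb))) xb := by
    have h := hnormsq.sqrt (by positivity)
    have : (fun y : H => Real.sqrt (‖y‖ ^ 2)) = fun y : H => ‖y‖ := by
      funext y; exact Real.sqrt_sq (norm_nonneg y)
    rwa [this] at h
  have hinv : HasStrictFDerivAt (fun x : H => ‖x‖⁻¹)
      ((-(‖xb‖ ^ 2)⁻¹) • ((1 / (2 * Real.sqrt (‖xb‖ ^ 2))) • (2 • (innerSL ℝ xb)))) xb :=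
    (hasStrictDerivAt_inv hxbne).comp_hasStrictFDerivAt xb hnorm
  have hc : HasStrictFDerivAt (fun x : H => r * ‖x‖⁻¹)
      (r • ((-(‖xb‖ ^ 2)⁻¹) • ((1 / (2 * Real.sqrt (‖xb‖ ^ 2))) • (2 • (innerSL ℝ xb))))) xb :=
    hinv.const_mul r
  have hf : HasStrictFDerivAt (fun x : H => (r * ‖x‖⁻¹) • x)
      ((r * ‖xb‖⁻¹) • ContinuousLinearMap.id ℝ H +
        (r • ((-(‖xb‖ ^ 2)⁻¹) •
          ((1 / (2 * Real.sqrt (‖xb‖ ^ 2))) • (2 • (innerSL ℝ xb))))).smulRight xb) xb :=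
    hc.smul (hasStrictFDerivAt_id xb)
  set A := (r * ‖xb‖⁻¹) • ContinuousLinearMap.id ℝ H +
        (r • ((-(‖xb‖ ^ 2)⁻¹) •
          ((1 / (2 * Real.sqrt (‖xb‖ ^ 2))) • (2 • (innerSL ℝ xb))))).smulRight xb with hA_def
  have hA : ∀ v : H, A v = (r / ‖xb‖) • (v - (((inner ℝ (v) (xb) : ℝ)) / ‖xb‖ ^ 2) • xb) := by
    intro v
    rw [hA_def]
    simp only [ContinuousLinearMap.add_apply, ContinuousLinearMap.smul_apply,
      ContinuousLinearMap.id_apply, ContinuousLinearMap.smulRight_apply,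
      ContinuousLinearMap.coe_smul', Pi.smul_apply, innerSL_apply_apply, smul_eq_mul,
      smul_sub, smul_smul, Real.sqrt_sq (norm_nonneg xb)]
    match_scalars
    · rw [div_eq_mul_inv]
    · field_simp
      rw [real_inner_comm xb v]
      ring
  -- Step 3: combine
  have hlo := hf.isLittleO
  rw [NormedAddCommGroup.tendsto_nhds_zero]
  intro ε hε
  have hhalf : (0:ℝ) < ε / 2 := by positivity
  have hev := hlo.def hhalf
  have h1 : ∀ᶠ p : H × H in 𝓝 (xb, xb), r < ‖p.1‖ :=
    (continuous_fst.norm.continuousAt).eventually_mem (Ioi_mem_nhds hxb)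
  have h2 : ∀ᶠ p : H × H in 𝓝 (xb, xb), r < ‖p.2‖ :=
    (continuous_snd.norm.continuousAt).eventually_mem (Ioi_mem_nhds hxb)
  filter_upwards [((h1.and h2).and hev).filter_mono nhdsWithin_le_nhds,
    eventually_mem_nhdsWithin] with p hp hps
  obtain ⟨⟨hp1, hp2⟩, hple⟩ := hp
  have hpne : p.1 ≠ p.2 := hps
  have hd : p.1 - p.2 ≠ 0 := sub_ne_zero.2 hpne
  have hdn : (0:ℝ) < ‖p.1 - p.2‖ := norm_pos_iff.2 hd
  have e1 : P p.1 = (r * ‖p.1‖⁻¹) • p.1 := by rw [key p.1 hp1, div_eq_mul_inv]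
  have e2 : P p.2 = (r * ‖p.2‖⁻¹) • p.2 := by rw [key p.2 hp2, div_eq_mul_inv]
  rw [e1, e2, ← hA (p.1 - p.2)]
  rw [norm_smul, norm_inv, norm_norm]
  calc ‖p.1 - p.2‖⁻¹ * ‖(r * ‖p.1‖⁻¹) • p.1 - (r * ‖p.2‖⁻¹) • p.2 - A (p.1 - p.2)‖
      ≤ ‖p.1 - p.2‖⁻¹ * (ε / 2 * ‖p.1 - p.2‖) := by
        apply mul_le_mul_of_nonneg_left _ (inv_nonneg.2 hdn.le)
        simpa using hple
    _ = ε / 2 := by field_simp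
    _ < ε := by linarith
end

section
/- Let H be a real Hilbert space, r > 0, rB = {z ∈ H : ‖z‖ ≤ r} the closed ball of radius r centered at the origin with metric projection P_{rB}, and let x̄ ∈ H with ‖x̄‖ = r. Suppose w ∈ H, w ≠ 0, is a direction for which there exists δ > 0 such that ‖x̄ + t·w‖ ≥ r for all t ∈ (0, δ). Then the one-sided Gâteaux directional derivative of P_{rB} at x̄ along w exists and equals w − (1/r²)·⟨x̄, w⟩·x̄; that is, (P_{rB}(x̄ + t·w) − P_{rB}(x̄))/t → w − (1/r²)·⟨x̄, w⟩·x̄ as t → 0⁺. -/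
open Filter Topology Metric Set

/-- Uniqueness of the metric projection onto the closed ball: if `r ≤ ‖x‖`, the
projection is `(r/‖x‖) • x`. -/
lemma proj_closedBall_eq {H : Type*} [NormedAddCommGroup H]
    [InnerProductSpace ℝ H] (r : ℝ) (hr : 0 < r) (P : H → H)
    (hP : ∀ x, P x ∈ Metric.closedBall (0 : H) r ∧
      ∀ z ∈ Metric.closedBall (0 : H) r, ‖x - P x‖ ≤ ‖x - z‖)
    (x : H) (hx : r ≤ ‖x‖) : P x = (r / ‖x‖) • x := by
  have hxpos : (0 : ℝ) < ‖x‖ := lt_of_lt_of_le hr hx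
  set c : H := (r / ‖x‖) • x with hc
  have hcr : ‖c‖ = r := by
    rw [hc, norm_smul, Real.norm_eq_abs, abs_of_pos (div_pos hr hxpos)]
    field_simp
  have hcball : c ∈ Metric.closedBall (0 : H) r := by
    simp [Metric.mem_closedBall, dist_eq_norm, hcr]
  have hxc : ‖x - c‖ = ‖x‖ - r := by
    have : x - c = (1 - r / ‖x‖) • x := by
      rw [hc, sub_smul, one_smul]
    rw [this, norm_smul, Real.norm_eq_abs, abs_of_nonneg, sub_mul, one_mul,
      div_mul_cancel₀ _ (ne_of_gt hxpos)]
    have : r / ‖x‖ ≤ 1 := (div_le_one hxpos).2 hx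
    linarith
  -- c is a minimizer
  have hcmin : ∀ z ∈ Metric.closedBall (0 : H) r, ‖x - c‖ ≤ ‖x - z‖ := by
    intro z hz
    rw [hxc]
    have hz' : ‖z‖ ≤ r := by simpa [Metric.mem_closedBall, dist_eq_norm] using hz
    have := norm_sub_norm_le x z
    linarith
  obtain ⟨hPball, hPmin⟩ := hP x
  set u : H := P x with hu
  have h1 : ‖x - u‖ ≤ ‖x - c‖ := hPmin c hcball
  have h2 : ‖x - c‖ ≤ ‖x - u‖ := hcmin u hPball
  have hd : ‖x - u‖ = ‖x - c‖ := le_antisymm h1 h2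
  -- midpoint argument
  have hmball : (2 : ℝ)⁻¹ • (u + c) ∈ Metric.closedBall (0 : H) r := by
    have hur : ‖u‖ ≤ r := by simpa [Metric.mem_closedBall, dist_eq_norm] using hPball
    have : ‖(2 : ℝ)⁻¹ • (u + c)‖ ≤ r := by
      rw [norm_smul, Real.norm_eq_abs]
      have := norm_add_le u c
      rw [abs_of_pos (by norm_num : (0:ℝ) < 2⁻¹)]
      nlinarith [norm_nonneg (u + c)]
    simpa [Metric.mem_closedBall, dist_eq_norm] using this
  have hm : ‖x - u‖ ≤ ‖x - (2 : ℝ)⁻¹ • (u + c)‖ := hPmin _ hmball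
  -- parallelogram law
  have hpar := parallelogram_law_with_norm ℝ (x - u) (x - c)
  have hsum : (x - u) + (x - c) = (2 : ℝ) • (x - (2 : ℝ)⁻¹ • (u + c)) := by
    rw [smul_sub, smul_smul]
    norm_num
    module
  have hdiff : (x - u) - (x - c) = c - u := by abel
  rw [hsum, hdiff, norm_smul] at hpar
  have h2n : ‖(2 : ℝ)‖ = 2 := by norm_num
  rw [h2n] at hpar
  have hcu : ‖c - u‖ = 0 := by
    have hxu := norm_nonneg (x - u)
    nlinarith [hm, hd, norm_nonneg (c - u), norm_nonneg (x - (2 : ℝ)⁻¹ • (u + c))]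
  have : c - u = 0 := norm_eq_zero.mp hcu
  rw [hu] at *
  rw [sub_eq_zero] at this
  exact this.symm

/-- Let `P` be the metric projection onto the closed ball of radius `r > 0` centered at
the origin, and let `‖xb‖ = r`. If `w ≠ 0` is a direction with `‖xb + t • w‖ ≥ r` for all
small `t > 0`, then the one-sided Gâteaux directional derivative of `P` at `xb` along `w`
exists and equals `w - (1/r²) • ⟨xb, w⟩ • xb`. -/
theorem gateaux_proj_closedBall_sphere_outward {H : Type*} [NormedAddCommGroup H]
    [InnerProductSpace ℝ H] [CompleteSpace H] (r : ℝ) (hr : 0 < r)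
    (P : H → H)
    (hP : ∀ x, P x ∈ Metric.closedBall (0 : H) r ∧
      ∀ z ∈ Metric.closedBall (0 : H) r, ‖x - P x‖ ≤ ‖x - z‖)
    (xb : H) (hxb : ‖xb‖ = r) (w : H) (hw : w ≠ 0)
    (hdir : ∃ δ > (0 : ℝ), ∀ t ∈ Set.Ioo (0 : ℝ) δ, r ≤ ‖xb + t • w‖) :
    Filter.Tendsto (fun t : ℝ => t⁻¹ • (P (xb + t • w) - P xb)) (𝓝[>] (0 : ℝ))
      (𝓝 (w - (1 / r ^ 2) • (inner ℝ xb w : ℝ) • xb)) := by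
  obtain ⟨δ, hδ, hout⟩ := hdir
  -- P xb = xb
  have hPxb : P xb = xb := by
    obtain ⟨_, hmin⟩ := hP xb
    have hxball : xb ∈ Metric.closedBall (0 : H) r := by
      simp [Metric.mem_closedBall, dist_eq_norm, hxb]
    have := hmin xb hxball
    simp only [sub_self, norm_zero] at this
    have := norm_le_zero_iff.mp this
    rw [sub_eq_zero] at this
    exact this.symm
  -- the model function F
  set F : ℝ → H := fun t => (r / ‖xb + t • w‖) • (xb + t • w) with hF
  have hF0 : F 0 = xb := by
    simp [hF, hxb, div_self (ne_of_gt hr)]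
  -- norm squared as a polynomial
  have hq : ∀ t : ℝ, ‖xb + t • w‖ = Real.sqrt (r ^ 2 + 2 * inner ℝ xb w * t + ‖w‖ ^ 2 * t ^ 2) := by
    intro t
    have h1 : ‖xb + t • w‖ ^ 2 = r ^ 2 + 2 * inner ℝ xb w * t + ‖w‖ ^ 2 * t ^ 2 := by
      rw [@norm_add_sq_real, real_inner_smul_right, norm_smul, Real.norm_eq_abs, hxb]
      rw [mul_pow, sq_abs]
      ring
    rw [← h1, Real.sqrt_sq (norm_nonneg _)]
  -- derivative of the norm along the line at 0
  have hn : HasDerivAt (fun t : ℝ => ‖xb + t • w‖) (inner ℝ xb w / r) 0 := by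
    have hq' : HasDerivAt (fun t : ℝ => r ^ 2 + 2 * inner ℝ xb w * t + ‖w‖ ^ 2 * t ^ 2)
        (2 * inner ℝ xb w) 0 := by
      have := ((hasDerivAt_id (0:ℝ)).const_mul (2 * (inner ℝ xb w : ℝ))).const_add (r ^ 2)
      have h2 := (((hasDerivAt_id (0:ℝ)).pow 2).const_mul (‖w‖ ^ 2))
      exact (this.add h2).congr_deriv (by simp)
    have hval : r ^ 2 + 2 * inner ℝ xb w * (0:ℝ) + ‖w‖ ^ 2 * (0:ℝ) ^ 2 ≠ 0 := by
      simp; positivity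
    have := (Real.hasDerivAt_sqrt hval).comp 0 hq'
    have heq : (fun t : ℝ => ‖xb + t • w‖) =
        (Real.sqrt ∘ fun t : ℝ => r ^ 2 + 2 * inner ℝ xb w * t + ‖w‖ ^ 2 * t ^ 2) := by
      funext t; exact hq t
    rw [heq]
    refine this.congr_deriv ?_
    have : Real.sqrt (r ^ 2 + 2 * (inner ℝ xb w : ℝ) * 0 + ‖w‖ ^ 2 * 0 ^ 2) = r := by
      simp [Real.sqrt_sq hr.le]
    rw [this]
    field_simp
  -- derivative of the scalar coefficient
  have hnorm0 : ‖xb + (0:ℝ) • w‖ = r := by simp [hxb]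
  have hscal : HasDerivAt (fun t : ℝ => r / ‖xb + t • w‖)
      (-(inner ℝ xb w : ℝ) / r ^ 2) 0 := by
    have hne : ‖xb + (0:ℝ) • w‖ ≠ 0 := by rw [hnorm0]; exact ne_of_gt hr
    have := (hasDerivAt_const (0:ℝ) r).div hn hne
    refine this.congr_deriv ?_
    rw [hnorm0]
    field_simp
    ring
  -- derivative of the line
  have hline : HasDerivAt (fun t : ℝ => xb + t • w) w 0 := by
    have := (hasDerivAt_id (0:ℝ)).smul_const w
    simpa using this.const_add xb
  -- derivative of F
  have hFderiv : HasDerivAt F (w - (1 / r ^ 2) • (inner ℝ xb w : ℝ) • xb) 0 := by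
    have := hscal.smul hline
    refine this.congr_deriv ?_
    rw [hnorm0, div_self (ne_of_gt hr)]
    simp only [zero_smul, add_zero, one_smul]
    match_scalars <;> field_simp <;> ring
  -- pass to the slope
  have hslope := hFderiv.tendsto_slope_zero_right
  simp only [zero_add, hF0] at hslope
  refine hslope.congr' ?_
  filter_upwards [Ioo_mem_nhdsGT_of_mem (by constructor <;> [rfl; exact hδ] :
    (0:ℝ) ∈ Set.Ico 0 δ)] with t ht
  have hPt : P (xb + t • w) = F t :=
    proj_closedBall_eq r hr P hP (xb + t • w) (hout t ht)
  rw [hPt, hPxb]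
end

section
/- Let 𝕂 = {x ∈ ℓ² : xᵢ ≥ 0 for all i ∈ ℕ} be the positive cone in ℓ² with metric projection P_𝕂, and let x ∈ ℓ² satisfy xᵢ > 0 for all i ∈ ℕ. Then P_𝕂 is not Fréchet differentiable at x; that is, there is no continuous linear map A : ℓ² → ℓ² such that (P_𝕂(u) − P_𝕂(x) − A(u − x))/‖u − x‖ → 0 as u → x. -/
open Filter Topology Metric Set
open scoped ENNReal NNReal

set_option synthInstance.maxHeartbeats 1000000
set_option maxHeartbeats 1000000

private noncomputable def en (n : ℕ) : lp (fun _ : ℕ => ℝ) 2 :=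
  lp.single (E := fun _ : ℕ => ℝ) 2 n (1 : ℝ)

private lemma en_self (n : ℕ) : en n n = 1 := lp.single_apply_self _ _ _

private lemma en_ne {i n : ℕ} (h : i ≠ n) : en n i = 0 := lp.single_apply_ne _ _ _ h

private lemma norm_en (n : ℕ) : ‖en n‖ = 1 := by
  have := lp.norm_single (p := 2) (E := fun _ : ℕ => ℝ) (by norm_num) n (1 : ℝ)
  simpa [en] using this

/-- The metric projection `P` onto the positive cone `𝕂` of `ℓ²` is not Fréchet
differentiable at any point `x` with all coordinates strictly positive. -/
theorem not_frechet_proj_positiveCone_lp2_pos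
    (P : lp (fun _ : ℕ => ℝ) 2 → lp (fun _ : ℕ => ℝ) 2)
    (hP : ∀ x, (∀ i : ℕ, 0 ≤ P x i) ∧
      ∀ z : lp (fun _ : ℕ => ℝ) 2, (∀ i : ℕ, 0 ≤ z i) → ‖x - P x‖ ≤ ‖x - z‖)
    (x : lp (fun _ : ℕ => ℝ) 2) (hx : ∀ i : ℕ, 0 < x i) :
    ¬ ∃ A : lp (fun _ : ℕ => ℝ) 2 →L[ℝ] lp (fun _ : ℕ => ℝ) 2,
      Filter.Tendsto (fun u => ‖u - x‖⁻¹ • (P u - P x - A (u - x)))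
        (𝓝[≠] x) (𝓝 0) := by
  rintro ⟨A, hA⟩
  -- `P` fixes the cone
  have Pfix : ∀ u : lp (fun _ : ℕ => ℝ) 2, (∀ i, 0 ≤ u i) → P u = u := by
    intro u hu
    have h := (hP u).2 u hu
    simp only [sub_self, norm_zero] at h
    have h2 : u - P u = 0 := norm_le_zero_iff.mp h
    exact (sub_eq_zero.mp h2).symm
  have Px : P x = x := Pfix x fun i => (hx i).le
  -- `A` fixes each `en n`
  have hAe : ∀ n, A (en n) = en n := by
    intro n
    have hg : Tendsto (fun t : ℝ => x + t • en n) (𝓝[>] 0) (𝓝[≠] x) := by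
      apply tendsto_nhdsWithin_of_tendsto_nhds_of_eventually_within
      · have hc : Continuous fun t : ℝ => x + t • en n :=
          continuous_const.add (continuous_id.smul continuous_const)
        have h0 : Tendsto (fun t : ℝ => x + t • en n) (𝓝 0) (𝓝 x) := by
          simpa using hc.tendsto 0
        exact h0.mono_left nhdsWithin_le_nhds
      · filter_upwards [self_mem_nhdsWithin] with t ht
        intro hmem
        simp only [Set.mem_compl_iff, Set.mem_singleton_iff] at hmem
        have : (x + t • en n) n = x n := by rw [hmem]
        simp only [lp.coeFn_add, lp.coeFn_smul, Pi.add_apply, Pi.smul_apply,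
          en_self, smul_eq_mul, mul_one] at this
        have ht' : (0 : ℝ) < t := ht
        linarith
    have hcomp := hA.comp hg
    have heq : (fun u => ‖u - x‖⁻¹ • (P u - P x - A (u - x))) ∘ (fun t : ℝ => x + t • en n)
        =ᶠ[𝓝[>] (0:ℝ)] fun _ => en n - A (en n) := by
      filter_upwards [self_mem_nhdsWithin] with t ht
      have ht' : (0 : ℝ) < t := ht
      have hcone : ∀ i, 0 ≤ (x + t • en n) i := by
        intro i
        rcases eq_or_ne i n with rfl | hi
        · simp only [lp.coeFn_add, lp.coeFn_smul, Pi.add_apply, Pi.smul_apply,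
            en_self, smul_eq_mul, mul_one]
          linarith [hx i]
        · simp only [lp.coeFn_add, lp.coeFn_smul, Pi.add_apply, Pi.smul_apply,
            en_ne hi, smul_eq_mul, mul_zero, add_zero]
          exact (hx i).le
      have hPu : P (x + t • en n) = x + t • en n := Pfix _ hcone
      have hsub : x + t • en n - x = t • en n := add_sub_cancel_left x _
      simp only [Function.comp_apply, hPu, Px, hsub, map_smul]
      rw [norm_smul, norm_en, mul_one, Real.norm_eq_abs, abs_of_pos ht',
        ← smul_sub, smul_smul, inv_mul_cancel₀ ht'.ne', one_smul]
    have hconst : Tendsto (fun _ : ℝ => en n - A (en n)) (𝓝[>] (0:ℝ)) (𝓝 0) :=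
      hcomp.congr' heq
    have h0 : en n - A (en n) = 0 := tendsto_const_nhds_iff.mp hconst
    exact (sub_eq_zero.mp h0).symm
  -- coordinates of x tend to 0
  have hxkto : Tendsto (fun k => x k) atTop (𝓝 0) := by
    have h1 : Tendsto (fun k => ‖x k‖ ^ (2 : ℝ≥0∞).toReal) atTop (𝓝 0) :=
      ((lp.memℓp x).summable (by norm_num)).tendsto_atTop_zero
    have h2 := (Real.continuous_sqrt.tendsto 0).comp h1
    have key : ∀ k, Real.sqrt (‖x k‖ ^ (2 : ℝ≥0∞).toReal) = x k := by
      intro k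
      rw [show ((2 : ℝ≥0∞).toReal) = ((2 : ℕ) : ℝ) by norm_num,
        Real.rpow_natCast, Real.sqrt_sq (norm_nonneg _), Real.norm_eq_abs,
        abs_of_pos (hx k)]
    have h3 : Tendsto (fun k => Real.sqrt (‖x k‖ ^ (2 : ℝ≥0∞).toReal)) atTop
        (𝓝 (Real.sqrt 0)) := h2
    rw [Real.sqrt_zero] at h3
    exact h3.congr key
  -- the test sequence
  have hs_norm : ∀ k, ‖x - (2 * x k) • en k - x‖ = 2 * x k := by
    intro k
    have h : x - (2 * x k) • en k - x = -((2 * x k) • en k) := by module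
    rw [h, norm_neg, norm_smul, norm_en, mul_one, Real.norm_eq_abs,
      abs_of_pos (by linarith [hx k])]
  have hs_tendsto : Tendsto (fun k => x - (2 * x k) • en k) atTop (𝓝[≠] x) := by
    apply tendsto_nhdsWithin_of_tendsto_nhds_of_eventually_within
    · rw [tendsto_iff_norm_sub_tendsto_zero]
      simp only [hs_norm]
      simpa using hxkto.const_mul 2
    · refine Eventually.of_forall fun k hk => ?_
      simp only [Set.mem_compl_iff, Set.mem_singleton_iff] at hk
      have : (x - (2 * x k) • en k) k = x k := by rw [hk]
      simp only [lp.coeFn_sub, lp.coeFn_smul, Pi.sub_apply, Pi.smul_apply,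
        en_self, smul_eq_mul, mul_one] at this
      linarith [hx k]
  -- compute the projection of the test sequence
  have hPs : ∀ k, P (x - (2 * x k) • en k) = x - (x k) • en k := by
    intro k
    have hcpos : 0 < x k := hx k
    set c := x k with hc
    set v := x - (2 * c) • en k with hv
    set q := P v with hq
    have hz : ∀ i, 0 ≤ (x - c • en k) i := by
      intro i
      rcases eq_or_ne i k with rfl | hi
      · simp only [lp.coeFn_sub, lp.coeFn_smul, Pi.sub_apply, Pi.smul_apply,
          en_self, smul_eq_mul, mul_one, ← hc, sub_self, le_refl]
      · simp only [lp.coeFn_sub, lp.coeFn_smul, Pi.sub_apply, Pi.smul_apply,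
          en_ne hi, smul_eq_mul, mul_zero, sub_zero]
        exact (hx i).le
    have hle : ‖v - q‖ ≤ c := by
      have h := (hP v).2 (x - c • en k) hz
      have hvz : v - (x - c • en k) = -(c • en k) := by rw [hv]; module
      rwa [hvz, norm_neg, norm_smul, norm_en, mul_one, Real.norm_eq_abs,
        abs_of_pos hcpos] at h
    have hvk : (v - q) k = -c - q k := by
      simp only [hv, lp.coeFn_sub, lp.coeFn_smul, Pi.sub_apply, Pi.smul_apply,
        en_self, smul_eq_mul, mul_one, ← hc]
      ring
    have hqk : q k = 0 := by
      have h1 : ‖(v - q) k‖ ≤ ‖v - q‖ :=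
        lp.norm_apply_le_norm (p := 2) (E := fun _ : ℕ => ℝ) two_ne_zero _ _
      have h2 := h1.trans hle
      rw [hvk, Real.norm_eq_abs] at h2
      have h3 := (abs_le.mp h2).1
      have h4 : 0 ≤ q k := (hP v).1 k
      linarith
    have hqi : ∀ i, i ≠ k → q i = x i := by
      intro i hik
      have hsum := lp.hasSum_norm (p := 2) (E := fun _ : ℕ => ℝ) (by norm_num) (v - q)
      have hfin : ∑ j ∈ ({k, i} : Finset ℕ), ‖(v - q) j‖ ^ (2 : ℝ≥0∞).toReal
          ≤ ‖v - q‖ ^ (2 : ℝ≥0∞).toReal := by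
        refine sum_le_hasSum _ (fun j _ => ?_) hsum
        have : (0:ℝ) ≤ ‖(v - q) j‖ := norm_nonneg _
        positivity
      rw [Finset.sum_pair (Ne.symm hik)] at hfin
      have hnk : ‖(v - q) k‖ = c := by
        rw [hvk, hqk, sub_zero, norm_neg, Real.norm_eq_abs, abs_of_pos hcpos]
      have htr : (2 : ℝ≥0∞).toReal = 2 := by norm_num
      have hrle : ‖v - q‖ ^ (2 : ℝ≥0∞).toReal ≤ c ^ (2 : ℝ≥0∞).toReal :=
        Real.rpow_le_rpow (norm_nonneg _) hle (by norm_num)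
      rw [hnk] at hfin
      have h5 : ‖(v - q) i‖ ^ (2 : ℝ≥0∞).toReal ≤ 0 := by linarith
      have h6 : ‖(v - q) i‖ ^ (2 : ℝ≥0∞).toReal = 0 :=
        le_antisymm h5 (Real.rpow_nonneg (norm_nonneg _) _)
      have h7 : ‖(v - q) i‖ = 0 := by
        by_contra hne
        have hpos : 0 < ‖(v - q) i‖ := lt_of_le_of_ne (norm_nonneg _) (Ne.symm hne)
        have := Real.rpow_pos_of_pos hpos ((2 : ℝ≥0∞).toReal)
        linarith
      have h8 : (v - q) i = 0 := norm_eq_zero.mp h7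
      have h9 : v i - q i = 0 := by
        simpa only [lp.coeFn_sub, Pi.sub_apply] using h8
      have hvi : v i = x i := by
        simp only [hv, lp.coeFn_sub, lp.coeFn_smul, Pi.sub_apply, Pi.smul_apply,
          en_ne hik, smul_eq_mul, mul_zero, sub_zero]
      rw [hvi] at h9
      linarith
    apply lp.ext
    funext i
    rcases eq_or_ne i k with rfl | hi
    · simp only [lp.coeFn_sub, lp.coeFn_smul, Pi.sub_apply, Pi.smul_apply,
        en_self, smul_eq_mul, mul_one, ← hc]
      rw [show (P (x - (2 * c) • en i)) i = q i from rfl, hqk]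
      ring
    · simp only [lp.coeFn_sub, lp.coeFn_smul, Pi.sub_apply, Pi.smul_apply,
        en_ne hi, smul_eq_mul, mul_zero, sub_zero]
      exact hqi i hi
  -- final contradiction
  have hcomp := hA.comp hs_tendsto
  have heq : ∀ k, (fun u => ‖u - x‖⁻¹ • (P u - P x - A (u - x)))
      ((fun k => x - (2 * x k) • en k) k) = (2 : ℝ)⁻¹ • en k := by
    intro k
    have hsub : x - (2 * x k) • en k - x = -((2 * x k) • en k) := by module
    simp only [hPs k, Px, hsub, map_neg, map_smul, hAe]
    have h : x - (x k) • en k - x - -((2 * x k) • en k) = (x k) • en k := by module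
    rw [h, norm_neg, norm_smul, norm_en, mul_one, Real.norm_eq_abs,
      abs_of_pos (by linarith [hx k] : (0:ℝ) < 2 * x k), smul_smul]
    congr 1
    have hne : (x k : ℝ) ≠ 0 := (hx k).ne'
    field_simp
  have hcc : Tendsto (fun k => (2 : ℝ)⁻¹ • en k) atTop (𝓝 0) := hcomp.congr heq
  have hnn : Tendsto (fun k => ‖(2 : ℝ)⁻¹ • en k‖) atTop (𝓝 0) := by
    simpa using hcc.norm
  have hcst : ∀ k : ℕ, ‖(2 : ℝ)⁻¹ • en k‖ = 2⁻¹ := by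
    intro k
    rw [norm_smul, norm_en, mul_one, Real.norm_eq_abs]
    norm_num
  have : Tendsto (fun _ : ℕ => (2:ℝ)⁻¹) atTop (𝓝 0) := hnn.congr hcst
  have h0 : (2:ℝ)⁻¹ = 0 := tendsto_const_nhds_iff.mp this
  norm_num at h0
end

section
/- Let 𝕂 = {x ∈ ℓ² : xᵢ ≥ 0 for all i ∈ ℕ} be the positive cone in ℓ² with metric projection P_𝕂, and let x ∈ ℓ² satisfy xᵢ > 0 for all i ∈ ℕ. Then for every w ∈ ℓ² with w ≠ 0, the one-sided Gâteaux directional derivative of P_𝕂 at x along w exists and equals w; that is, (P_𝕂(x + t·w) − P_𝕂(x))/t → w as t → 0⁺. -/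
open Filter Topology Metric Set

noncomputable section GateauxAux

local notation "H" => lp (fun _ : ℕ => ℝ) 2

private lemma aux_memℓp_of_le (g : H) {f : ℕ → ℝ} (h : ∀ i, |f i| ≤ |g i|) :
    Memℓp f 2 := by
  apply memℓp_gen
  have hg : Summable fun i => ‖g i‖ ^ (2 : ENNReal).toReal :=
    (lp.memℓp g).summable (by norm_num)
  refine hg.of_nonneg_of_le (fun i => by positivity) (fun i => ?_)
  have h2 : (2 : ENNReal).toReal = 2 := by norm_num
  rw [h2]
  have := h i
  simp only [Real.norm_eq_abs, Real.rpow_two]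
  nlinarith [abs_nonneg (f i), abs_nonneg (g i)]

private def posP (y : H) : H :=
  ⟨fun i => max (y i) 0, aux_memℓp_of_le y (fun i => by
    rw [abs_of_nonneg (le_max_right _ _)]
    exact max_le (le_abs_self _) (abs_nonneg _))⟩

private lemma posP_apply (y : H) (i : ℕ) : posP y i = max (y i) 0 := rfl

private lemma aux_summable_sq (f : H) : Summable fun i => (f i) ^ 2 := by
  have hg : Summable fun i => ‖f i‖ ^ (2 : ENNReal).toReal :=
    (lp.memℓp f).summable (by norm_num)
  have h2 : (2 : ENNReal).toReal = 2 := by norm_num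
  rw [h2] at hg
  refine hg.congr fun i => ?_
  simp [Real.rpow_two, sq_abs, sq]

private lemma aux_norm_sq_eq (f : H) : ‖f‖ ^ 2 = ∑' i, (f i) ^ 2 := by
  rw [← real_inner_self_eq_norm_sq, lp.inner_eq_tsum]
  refine tsum_congr fun i => ?_
  simp [RCLike.inner_apply, sq]

private lemma aux_norm_le (f g : H) (h : ∀ i, |f i| ≤ |g i|) : ‖f‖ ≤ ‖g‖ := by
  have hsq : ‖f‖ ^ 2 ≤ ‖g‖ ^ 2 := by
    rw [aux_norm_sq_eq, aux_norm_sq_eq]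
    refine Summable.tsum_le_tsum (fun i => ?_) (aux_summable_sq f) (aux_summable_sq g)
    calc (f i) ^ 2 = |f i| ^ 2 := (sq_abs _).symm
    _ ≤ |g i| ^ 2 := pow_le_pow_left₀ (abs_nonneg _) (h i) 2
    _ = (g i) ^ 2 := sq_abs _
  nlinarith [norm_nonneg f, norm_nonneg g]

private lemma posP_min (y z : H) (hz : ∀ i, 0 ≤ z i) : ‖y - posP y‖ ≤ ‖y - z‖ := by
  refine aux_norm_le _ _ fun i => ?_
  rw [lp.coeFn_sub, lp.coeFn_sub, Pi.sub_apply, Pi.sub_apply, posP_apply]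
  rcases le_or_gt 0 (y i) with hy | hy
  · rw [max_eq_left hy]; simp [abs_nonneg]
  · rw [max_eq_right hy.le]
    rw [abs_of_nonpos (by linarith), abs_of_nonpos (by linarith [hz i])]
    linarith [hz i]

private lemma posP_nonneg (y : H) (i : ℕ) : 0 ≤ posP y i := le_max_right _ _

/-- Uniqueness of the metric projection onto the positive cone. -/
private lemma proj_eq_posP (y q : H) (hq0 : ∀ i : ℕ, 0 ≤ q i)
    (hqmin : ∀ z : H, (∀ i : ℕ, 0 ≤ z i) → ‖y - q‖ ≤ ‖y - z‖) : q = posP y := by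
  set p := posP y with hp
  have h1 : ‖y - q‖ ≤ ‖y - p‖ := hqmin p (posP_nonneg y)
  have h2 : ‖y - p‖ ≤ ‖y - q‖ := posP_min y q hq0
  have heq : ‖y - q‖ = ‖y - p‖ := le_antisymm h1 h2
  set m : H := (2⁻¹ : ℝ) • (p + q) with hm
  have hm0 : ∀ i : ℕ, 0 ≤ m i := by
    intro i
    rw [hm, lp.coeFn_smul, Pi.smul_apply, lp.coeFn_add, Pi.add_apply]
    have := posP_nonneg y i
    have := hq0 i
    simp only [smul_eq_mul]
    nlinarith
  have h3 : ‖y - q‖ ≤ ‖y - m‖ := hqmin m hm0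
  have hpar := parallelogram_law_with_norm ℝ (y - p) (y - q)
  have hab : (y - p) + (y - q) = (2 : ℝ) • (y - m) := by
    rw [hm]; module
  have hsub : (y - p) - (y - q) = q - p := by abel
  rw [hab, hsub, norm_smul] at hpar
  simp only [Real.norm_ofNat] at hpar
  have hqp : ‖q - p‖ = 0 := by
    nlinarith [norm_nonneg (q - p), norm_nonneg (y - m), norm_nonneg (y - q),
      mul_self_le_mul_self (norm_nonneg (y - q)) h3]
  have := norm_eq_zero.mp hqp
  rw [sub_eq_zero] at this
  exact this

end GateauxAux

/-- Let `P` be the metric projection onto the positive cone `𝕂` of `ℓ²` and let `x` have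
all coordinates strictly positive.  Then for every nonzero `w`, the one-sided Gâteaux
directional derivative of `P` at `x` along `w` exists and equals `w`. -/
theorem gateaux_proj_positiveCone_lp2_pos
    (P : lp (fun _ : ℕ => ℝ) 2 → lp (fun _ : ℕ => ℝ) 2)
    (hP : ∀ x, (∀ i : ℕ, 0 ≤ P x i) ∧
      ∀ z : lp (fun _ : ℕ => ℝ) 2, (∀ i : ℕ, 0 ≤ z i) → ‖x - P x‖ ≤ ‖x - z‖)
    (x : lp (fun _ : ℕ => ℝ) 2) (hx : ∀ i : ℕ, 0 < x i) :
    ∀ w : lp (fun _ : ℕ => ℝ) 2, w ≠ 0 →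
      Filter.Tendsto (fun t : ℝ => t⁻¹ • (P (x + t • w) - P x)) (𝓝[>] (0 : ℝ))
        (𝓝 w) := by
  intro w _hw
  -- P x = x
  have hPx : P x = x := by
    have h := (hP x).2 x (fun i => (hx i).le)
    rw [sub_self, norm_zero] at h
    have := le_antisymm h (norm_nonneg _)
    rw [norm_eq_zero, sub_eq_zero] at this
    exact this.symm
  -- P (x + t • w) = posP (x + t • w)
  have hPt : ∀ t : ℝ, P (x + t • w) = posP (x + t • w) := fun t =>
    proj_eq_posP (x + t • w) (P (x + t • w)) (hP (x + t • w)).1 (hP (x + t • w)).2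
  -- Reduce to showing the norm of the difference tends to zero
  rw [tendsto_iff_norm_sub_tendsto_zero]
  -- the difference element
  set D : ℝ → lp (fun _ : ℕ => ℝ) 2 := fun t => t⁻¹ • (P (x + t • w) - P x) - w with hD
  -- coordinates of D for positive t
  have hDcoord : ∀ t : ℝ, 0 < t → ∀ i : ℕ,
      D t i = t⁻¹ * (max (x i + t * w i) 0 - x i) - w i := by
    intro t ht i
    rw [hD]
    simp only [hPt t, hPx]
    rw [lp.coeFn_sub, Pi.sub_apply, lp.coeFn_smul, Pi.smul_apply, lp.coeFn_sub,
      Pi.sub_apply, posP_apply, lp.coeFn_add, Pi.add_apply, lp.coeFn_smul, Pi.smul_apply]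
    simp [smul_eq_mul]
  -- bound on coordinates of D for positive t
  have hDbound : ∀ t : ℝ, 0 < t → ∀ i : ℕ, |D t i| ≤ |w i| := by
    intro t ht i
    rw [hDcoord t ht i]
    rcases le_or_gt 0 (x i + t * w i) with h | h
    · rw [max_eq_left h]
      have : t⁻¹ * (x i + t * w i - x i) - w i = 0 := by
        field_simp
        ring
      have h2 : t⁻¹ * (x i + t * w i - x i) - w i = t⁻¹ * ((x i + t * w i) - x i) - w i := by ring
      rw [this]; simp [abs_nonneg]
    · rw [max_eq_right h.le]
      have hxi := hx i
      have ht' : (0:ℝ) < t⁻¹ := inv_pos.mpr ht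
      have hwi : w i < 0 := by nlinarith
      have key : t⁻¹ * (0 - x i) - w i = -(t⁻¹ * x i) - w i := by ring
      rw [key, abs_of_neg hwi]
      have hneg : t⁻¹ * x i + w i < 0 := by
        have h1 := mul_neg_of_pos_of_neg ht' h
        have htw : t⁻¹ * (t * w i) = w i := by field_simp
        nlinarith
      rw [abs_of_nonneg (by linarith)]
      have := mul_pos ht' hxi
      linarith
  -- squared norm of D t as a tsum
  have hnormsq : ∀ t : ℝ, ‖D t‖ ^ 2 = ∑' i, (D t i) ^ 2 := fun t => aux_norm_sq_eq (D t)
  -- pointwise convergence of coordinates squared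
  have hpt : ∀ i : ℕ, Tendsto (fun t => (D t i) ^ 2) (𝓝[>] (0:ℝ)) (𝓝 0) := by
    intro i
    have hδ : (0:ℝ) < x i / (|w i| + 1) := by
      have := hx i
      positivity
    apply Tendsto.congr' (f₁ := fun _ => (0:ℝ))
    · filter_upwards [Ioo_mem_nhdsGT hδ] with t ht
      obtain ⟨ht0, htδ⟩ := ht
      have hxi := hx i
      have hwle : w i ≥ -(|w i| + 1) := by
        have := neg_abs_le (w i); linarith
      have hpos : 0 ≤ x i + t * w i := by
        have h1 : t * (|w i| + 1) < x i := (lt_div_iff₀ (by positivity)).mp htδ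
        nlinarith [mul_nonneg ht0.le (abs_nonneg (w i)), abs_nonneg (w i),
          neg_abs_le (w i), mul_le_mul_of_nonneg_left (neg_abs_le (w i)) ht0.le]
      rw [hDcoord t ht0 i, max_eq_left hpos]
      have : t⁻¹ * (x i + t * w i - x i) - w i = 0 := by field_simp; ring
      rw [this]; norm_num
    · exact tendsto_const_nhds
  -- dominated convergence
  have hsum : Tendsto (fun t => ∑' i, (D t i) ^ 2) (𝓝[>] (0:ℝ)) (𝓝 0) := by
    have key := tendsto_tsum_of_dominated_convergence (𝓕 := 𝓝[>] (0:ℝ))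
      (g := fun _ : ℕ => (0:ℝ)) (aux_summable_sq w) hpt ?_
    · simpa using key
    · filter_upwards [self_mem_nhdsWithin] with t ht i
      have hb := hDbound t ht i
      rw [Real.norm_eq_abs, abs_of_nonneg (sq_nonneg _)]
      calc (D t i) ^ 2 = |D t i| ^ 2 := (sq_abs _).symm
      _ ≤ |w i| ^ 2 := pow_le_pow_left₀ (abs_nonneg _) hb 2
      _ = (w i) ^ 2 := sq_abs _
  -- conclude
  have hnsq : Tendsto (fun t => ‖D t‖ ^ 2) (𝓝[>] (0:ℝ)) (𝓝 0) := by
    simpa only [hnormsq] using hsum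
  have : Tendsto (fun t => Real.sqrt (‖D t‖ ^ 2)) (𝓝[>] (0:ℝ)) (𝓝 (Real.sqrt 0)) :=
    (Real.continuous_sqrt.continuousAt).tendsto.comp hnsq
  simpa [Real.sqrt_sq (norm_nonneg _), Real.sqrt_zero, hD] using this
end

section
/- Let 𝕂 = {x ∈ ℓ² : xᵢ ≥ 0 for all i ∈ ℕ} be the positive cone in ℓ² with metric projection P_𝕂, and let x ∈ ℓ² satisfy xᵢ < 0 for all i ∈ ℕ. Then P_𝕂 is not Fréchet differentiable at x; that is, there is no continuous linear map A : ℓ² → ℓ² such that (P_𝕂(u) − P_𝕂(x) − A(u − x))/‖u − x‖ → 0 as u → x. -/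
open Filter Topology Metric Set

private lemma sq_key {a w : ℝ} (hw : 0 ≤ w) :
    (a - max a 0) ^ 2 ≤ (a - w) ^ 2 ∧ (w ≠ max a 0 → (a - max a 0) ^ 2 < (a - w) ^ 2) := by
  rcases le_or_gt a 0 with h | h
  · rw [max_eq_right h]
    constructor
    · nlinarith
    · intro hne
      have hw' : 0 < w := lt_of_le_of_ne hw (Ne.symm hne)
      nlinarith
  · rw [max_eq_left h.le]
    constructor
    · nlinarith
    · intro hne
      have : a - w ≠ 0 := sub_ne_zero.mpr (fun hh => hne hh.symm)
      nlinarith [sq_pos_of_ne_zero this]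

private lemma proj_char
    (P : lp (fun _ : ℕ => ℝ) 2 → lp (fun _ : ℕ => ℝ) 2)
    (hP : ∀ x, (∀ i : ℕ, 0 ≤ P x i) ∧
      ∀ z : lp (fun _ : ℕ => ℝ) 2, (∀ i : ℕ, 0 ≤ z i) → ‖x - P x‖ ≤ ‖x - z‖)
    (u z : lp (fun _ : ℕ => ℝ) 2) (hz : ∀ i, z i = max (u i) 0) : P u = z := by
  obtain ⟨hq, hmin⟩ := hP u
  by_contra hne
  have hex : ∃ j, P u j ≠ z j := by
    by_contra hc
    push_neg at hc
    exact hne (lp.ext (funext hc))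
  obtain ⟨j, hj⟩ := hex
  have hzK : ∀ i, 0 ≤ z i := fun i => (hz i) ▸ le_max_right _ _
  have hle := hmin z hzK
  have h2 : (0:ℝ) < (2 : ENNReal).toReal := by norm_num
  have hnorm : ∀ f : lp (fun _ : ℕ => ℝ) 2,
      ‖f‖ ^ ((2:ENNReal).toReal) = ∑' i, ‖f i‖ ^ ((2:ENNReal).toReal) :=
    fun f => lp.norm_rpow_eq_tsum h2 f
  have hrw : ∀ r : ℝ, ‖r‖ ^ ((2:ENNReal).toReal) = r ^ 2 := by
    intro r
    have : ((2:ENNReal).toReal) = ((2:ℕ) : ℝ) := by norm_num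
    rw [this, Real.rpow_natCast, Real.norm_eq_abs, sq_abs]
  -- termwise inequality
  have hterm : ∀ i, ‖(u - z) i‖ ^ ((2:ENNReal).toReal) ≤ ‖(u - P u) i‖ ^ ((2:ENNReal).toReal) := by
    intro i
    rw [hrw, hrw, lp.coeFn_sub, lp.coeFn_sub, Pi.sub_apply, Pi.sub_apply, hz i]
    exact (sq_key (hq i)).1
  have hstrict : ‖(u - z) j‖ ^ ((2:ENNReal).toReal) < ‖(u - P u) j‖ ^ ((2:ENNReal).toReal) := by
    rw [hrw, hrw, lp.coeFn_sub, lp.coeFn_sub, Pi.sub_apply, Pi.sub_apply, hz j]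
    rw [hz j] at hj
    exact (sq_key (hq j)).2 hj
  have hs1 : Summable fun i => ‖(u - z) i‖ ^ ((2:ENNReal).toReal) :=
    (lp.memℓp (u - z)).summable h2
  have hs2 : Summable fun i => ‖(u - P u) i‖ ^ ((2:ENNReal).toReal) :=
    (lp.memℓp (u - P u)).summable h2
  have hlt : ‖u - z‖ ^ ((2:ENNReal).toReal) < ‖u - P u‖ ^ ((2:ENNReal).toReal) := by
    rw [hnorm, hnorm]
    exact Summable.tsum_lt_tsum hterm hstrict hs1 hs2
  have : ‖u - P u‖ ^ ((2:ENNReal).toReal) ≤ ‖u - z‖ ^ ((2:ENNReal).toReal) :=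
    Real.rpow_le_rpow (norm_nonneg _) hle h2.le
  exact absurd (lt_of_le_of_lt this hlt) (lt_irrefl _)

set_option maxHeartbeats 1000000 in
/-- The metric projection `P` onto the positive cone `𝕂` of `ℓ²` is not Fréchet
differentiable at any point `x` with all coordinates strictly negative. -/
theorem not_frechet_proj_positiveCone_lp2_neg
    (P : lp (fun _ : ℕ => ℝ) 2 → lp (fun _ : ℕ => ℝ) 2)
    (hP : ∀ x, (∀ i : ℕ, 0 ≤ P x i) ∧
      ∀ z : lp (fun _ : ℕ => ℝ) 2, (∀ i : ℕ, 0 ≤ z i) → ‖x - P x‖ ≤ ‖x - z‖)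
    (x : lp (fun _ : ℕ => ℝ) 2) (hx : ∀ i : ℕ, x i < 0) :
    ¬ ∃ A : lp (fun _ : ℕ => ℝ) 2 →L[ℝ] lp (fun _ : ℕ => ℝ) 2,
      Filter.Tendsto (fun u => ‖u - x‖⁻¹ • (P u - P x - A (u - x)))
        (𝓝[≠] x) (𝓝 0) := by
  rintro ⟨A, hA⟩
  have h2 : (0:ℝ) < (2 : ENNReal).toReal := by norm_num
  set t : ℕ → ℝ := fun n => -x n with ht_def
  have ht : ∀ n, 0 < t n := fun n => neg_pos.mpr (hx n)
  set e : ℕ → lp (fun _ : ℕ => ℝ) 2 := fun n => lp.single 2 n (t n) with he_def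
  have he_self : ∀ n, e n n = t n := by
    intro n
    rw [he_def]
    exact lp.single_apply_self (E := fun _ : ℕ => ℝ) 2 n (t n)
  have he_ne : ∀ n, ∀ i, i ≠ n → e n i = 0 := by
    intro n i hi
    rw [he_def]
    exact lp.single_apply_ne (E := fun _ : ℕ => ℝ) 2 n (t n) hi
  have he_norm : ∀ n, ‖e n‖ = t n := by
    intro n
    rw [he_def]
    have := lp.norm_single (E := fun _ : ℕ => ℝ) (p := 2) (by norm_num) n (t n)
    rw [Real.norm_eq_abs, abs_of_pos (ht n)] at this
    exact this
  -- coordinates of x tend to zero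
  have hsum : Summable fun i => ‖x i‖ ^ ((2:ENNReal).toReal) := (lp.memℓp x).summable h2
  have ht0 : Tendsto t atTop (𝓝 0) := by
    have h1 : Tendsto (fun n => ‖x n‖ ^ ((2:ENNReal).toReal)) atTop (𝓝 0) :=
      hsum.tendsto_atTop_zero
    have h2' : Tendsto (fun n => Real.sqrt (‖x n‖ ^ ((2:ENNReal).toReal))) atTop (𝓝 0) := by
      have := (Real.continuous_sqrt.tendsto 0).comp h1
      simpa [Function.comp_def] using this
    have heq : ∀ n, Real.sqrt (‖x n‖ ^ ((2:ENNReal).toReal)) = t n := by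
      intro n
      have h3 : ((2:ENNReal).toReal) = ((2:ℕ) : ℝ) := by norm_num
      rw [h3, Real.rpow_natCast, Real.norm_eq_abs, sq_abs, Real.sqrt_sq_eq_abs,
        abs_of_neg (hx n)]
    rw [tendsto_congr heq] at h2'
    exact h2'
  -- the two approach sequences
  set v : ℕ → lp (fun _ : ℕ => ℝ) 2 := fun n => x + e n with hv_def
  set u : ℕ → lp (fun _ : ℕ => ℝ) 2 := fun n => x + (2:ℝ) • e n with hu_def
  have hvx : ∀ n, v n - x = e n := by intro n; rw [hv_def]; exact add_sub_cancel_left x (e n)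
  have hux : ∀ n, u n - x = (2:ℝ) • e n := by intro n; rw [hu_def]; exact add_sub_cancel_left x ((2:ℝ) • e n)
  have hvnorm : ∀ n, ‖v n - x‖ = t n := fun n => by rw [hvx, he_norm]
  have hunorm : ∀ n, ‖u n - x‖ = 2 * t n := fun n => by
    rw [hux, norm_smul, he_norm, Real.norm_ofNat]
  -- projections
  have hPx : P x = 0 := by
    apply proj_char P hP
    intro i
    rw [lp.coeFn_zero, Pi.zero_apply, max_eq_right (hx i).le]
  have hPv : ∀ n, P (v n) = 0 := by
    intro n
    apply proj_char P hP
    intro i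
    rw [lp.coeFn_zero, Pi.zero_apply]
    rcases eq_or_ne i n with rfl | hi
    · have : (v i) i = 0 := by
        simp only [hv_def, lp.coeFn_add, Pi.add_apply, he_self]
        simp [ht_def]
      rw [this, max_self]
    · have : (v n) i = x i := by
        simp only [hv_def, lp.coeFn_add, Pi.add_apply, he_ne n i hi, add_zero]
      rw [this, max_eq_right (hx i).le]
  have hPu : ∀ n, P (u n) = e n := by
    intro n
    apply proj_char P hP
    intro i
    rcases eq_or_ne i n with rfl | hi
    · have h1 : (u i) i = t i := by
        simp only [hu_def, lp.coeFn_add, Pi.add_apply, lp.coeFn_smul, Pi.smul_apply, he_self,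
          smul_eq_mul]
        simp [ht_def]; ring
      rw [he_self, h1, max_eq_left (ht i).le]
    · have h1 : (u n) i = x i := by
        simp only [hu_def, lp.coeFn_add, Pi.add_apply, lp.coeFn_smul, Pi.smul_apply,
          he_ne n i hi, smul_eq_mul, mul_zero, add_zero]
      rw [he_ne n i hi, h1, max_eq_right (hx i).le]
  -- the sequences tend to x within the punctured neighborhood
  have hvne : ∀ n, v n ≠ x := by
    intro n h
    have : e n = 0 := by
      have := hvx n
      rw [h, sub_self] at this
      exact this.symm
    have := congrArg (fun f : lp (fun _ : ℕ => ℝ) 2 => f n) this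
    simp only [he_self, lp.coeFn_zero] at this
    exact (ht n).ne' (by simpa using this)
  have hune : ∀ n, u n ≠ x := by
    intro n h
    have h0 : (2:ℝ) • e n = 0 := by
      have := hux n
      rw [h, sub_self] at this
      exact this.symm
    have := congrArg (fun f : lp (fun _ : ℕ => ℝ) 2 => f n) h0
    simp only [lp.coeFn_smul, Pi.smul_apply, he_self, lp.coeFn_zero, Pi.zero_apply,
      smul_eq_mul] at this
    exact (ht n).ne' (by linarith)
  have hv_tendsto : Tendsto v atTop (𝓝[≠] x) := by
    apply tendsto_nhdsWithin_of_tendsto_nhds_of_eventually_within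
    · rw [tendsto_iff_norm_sub_tendsto_zero]
      simpa [hvnorm] using ht0
    · exact Eventually.of_forall fun n => hvne n
  have hu_tendsto : Tendsto u atTop (𝓝[≠] x) := by
    apply tendsto_nhdsWithin_of_tendsto_nhds_of_eventually_within
    · rw [tendsto_iff_norm_sub_tendsto_zero]
      have : Tendsto (fun n => 2 * t n) atTop (𝓝 (2 * 0)) := ht0.const_mul 2
      simpa [hunorm] using this
    · exact Eventually.of_forall fun n => hune n
  -- compose
  have hQ := hA.comp hu_tendsto
  have hR := hA.comp hv_tendsto
  have hD : Tendsto (fun n =>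
      (‖u n - x‖⁻¹ • (P (u n) - P x - A (u n - x)))
        - (‖v n - x‖⁻¹ • (P (v n) - P x - A (v n - x)))) atTop (𝓝 0) := by
    simpa using hQ.sub hR
  have hDval : ∀ n,
      (‖u n - x‖⁻¹ • (P (u n) - P x - A (u n - x)))
        - (‖v n - x‖⁻¹ • (P (v n) - P x - A (v n - x))) = (2 * t n)⁻¹ • e n := by
    intro n
    rw [hPx, hPv, hPu, hvnorm, hunorm, hvx, hux, map_smul]
    have htn : t n ≠ 0 := (ht n).ne'
    match_scalars <;> field_simp <;> ring
  have hDnorm : ∀ n,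
      ‖(‖u n - x‖⁻¹ • (P (u n) - P x - A (u n - x)))
        - (‖v n - x‖⁻¹ • (P (v n) - P x - A (v n - x)))‖ = 1/2 := by
    intro n
    rw [hDval, norm_smul, he_norm, Real.norm_eq_abs,
      abs_of_pos (inv_pos.mpr (mul_pos two_pos (ht n)))]
    rw [mul_inv, mul_assoc, inv_mul_cancel₀ (ht n).ne', mul_one]
    norm_num
  have hnorm0 : Tendsto (fun n =>
      ‖(‖u n - x‖⁻¹ • (P (u n) - P x - A (u n - x)))
        - (‖v n - x‖⁻¹ • (P (v n) - P x - A (v n - x)))‖) atTop (𝓝 0) := by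
    simpa using hD.norm
  rw [tendsto_congr hDnorm] at hnorm0
  have := tendsto_nhds_unique hnorm0 tendsto_const_nhds
  norm_num at this
end

section
/- Let 𝕂 = {x ∈ ℓ² : xᵢ ≥ 0 for all i ∈ ℕ} be the positive cone in ℓ² with metric projection P_𝕂, and let x ∈ ℓ² satisfy xᵢ < 0 for all i ∈ ℕ. Then for every w ∈ ℓ² with w ≠ 0, the one-sided Gâteaux directional derivative of P_𝕂 at x along w exists and equals 0; that is, (P_𝕂(x + t·w) − P_𝕂(x))/t → 0 as t → 0⁺. -/
open Filter Topology Metric Set ENNReal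

lemma posMem (y : lp (fun _ : ℕ => ℝ) 2) : Memℓp (fun i => max (y i) 0) 2 := by
  apply memℓp_gen
  refine Summable.of_nonneg_of_le (fun i => ?_) (fun i => ?_)
    ((lp.memℓp y).summable (by norm_num))
  · positivity
  · apply Real.rpow_le_rpow (norm_nonneg _) ?_ (by norm_num)
    simp only [Real.norm_eq_abs]
    rcases le_or_gt (y i) 0 with h | h
    · simp [max_eq_right h, abs_nonneg]
    · rw [max_eq_left h.le]

noncomputable def posPart (y : lp (fun _ : ℕ => ℝ) 2) : lp (fun _ : ℕ => ℝ) 2 :=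
  ⟨fun i => max (y i) 0, posMem y⟩

@[simp] lemma posPart_apply (y : lp (fun _ : ℕ => ℝ) 2) (i : ℕ) :
    posPart y i = max (y i) 0 := rfl

lemma proj_eq_posPart (y p : lp (fun _ : ℕ => ℝ) 2) (hp : ∀ i, 0 ≤ p i)
    (hmin : ∀ z : lp (fun _ : ℕ => ℝ) 2, (∀ i, 0 ≤ z i) → ‖y - p‖ ≤ ‖y - z‖) :
    p = posPart y := by
  set q := posPart y with hqdef
  have hq : ∀ i, 0 ≤ q i := fun i => le_max_right _ _
  have hle : ‖y - p‖ ≤ ‖y - q‖ := hmin q hq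
  have hvar : (inner ℝ (y - q) (p - q) : ℝ) ≤ 0 := by
    rw [lp.inner_eq_tsum]
    apply tsum_nonpos
    intro i
    simp only [lp.coeFn_sub, Pi.sub_apply, RCLike.inner_apply, conj_trivial, hqdef,
      posPart_apply]
    rcases le_or_gt (y i) 0 with h | h
    · rw [max_eq_right h]
      simp only [sub_zero]
      exact mul_nonpos_of_nonneg_of_nonpos (hp i) h
    · rw [max_eq_left h.le]
      simp
  have key : ‖y - p‖ ^ 2 = ‖y - q‖ ^ 2 - 2 * (inner ℝ (y - q) (p - q) : ℝ) + ‖p - q‖ ^ 2 := by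
    have h : y - p = (y - q) - (p - q) := by abel
    rw [h, @norm_sub_sq_real]
  have hle2 : ‖y - p‖ ^ 2 ≤ ‖y - q‖ ^ 2 :=
    pow_le_pow_left₀ (norm_nonneg _) hle 2
  have : ‖p - q‖ = 0 := by nlinarith [norm_nonneg (p - q)]
  have := norm_eq_zero.mp this
  rw [sub_eq_zero] at this
  exact this

lemma norm_sq_eq_tsum' (f : lp (fun _ : ℕ => ℝ) 2) : ‖f‖ ^ 2 = ∑' i, ‖f i‖ ^ 2 := by
  have h := lp.norm_rpow_eq_tsum (p := 2) (by norm_num) f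
  have h2 : ((2 : ℝ≥0∞)).toReal = (2 : ℝ) := by norm_num
  rw [h2] at h
  calc ‖f‖ ^ 2 = ‖f‖ ^ (2 : ℝ) := by
        rw [← Real.rpow_natCast ‖f‖ 2]; norm_num
    _ = ∑' i, ‖f i‖ ^ (2 : ℝ) := h
    _ = ∑' i, ‖f i‖ ^ 2 := by
        congr 1; funext i; rw [← Real.rpow_natCast ‖f i‖ 2]; norm_num

/-- Let `P` be the metric projection onto the positive cone `𝕂` of `ℓ²` and let `x` have
all coordinates strictly negative.  Then for every nonzero `w`, the one-sided Gâteaux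
directional derivative of `P` at `x` along `w` exists and equals `0`. -/
theorem gateaux_proj_positiveCone_lp2_neg
    (P : lp (fun _ : ℕ => ℝ) 2 → lp (fun _ : ℕ => ℝ) 2)
    (hP : ∀ x, (∀ i : ℕ, 0 ≤ P x i) ∧
      ∀ z : lp (fun _ : ℕ => ℝ) 2, (∀ i : ℕ, 0 ≤ z i) → ‖x - P x‖ ≤ ‖x - z‖)
    (x : lp (fun _ : ℕ => ℝ) 2) (hx : ∀ i : ℕ, x i < 0) :
    ∀ w : lp (fun _ : ℕ => ℝ) 2, w ≠ 0 →
      Filter.Tendsto (fun t : ℝ => t⁻¹ • (P (x + t • w) - P x)) (𝓝[>] (0 : ℝ))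
        (𝓝 0) := by
  intro w _hw
  have hPeq : ∀ y, P y = posPart y := fun y => proj_eq_posPart y (P y) (hP y).1 (hP y).2
  have hPx : P x = 0 := by
    rw [hPeq]
    apply lp.ext
    funext i
    simp only [posPart_apply, lp.coeFn_zero, Pi.zero_apply]
    exact max_eq_right (hx i).le
  have hcoord : ∀ t : ℝ, ∀ i : ℕ,
      (t⁻¹ • (P (x + t • w) - P x)) i = t⁻¹ * max (x i + t * w i) 0 := by
    intro t i
    rw [hPeq, hPx]
    simp [lp.coeFn_smul, lp.coeFn_sub, lp.coeFn_add, posPart_apply]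
    left; rfl
  set g : ℝ → ℕ → ℝ := fun t i => ‖(t⁻¹ • (P (x + t • w) - P x)) i‖ ^ 2 with hgdef
  have hsum_bound : Summable (fun i : ℕ => ‖w i‖ ^ 2) := by
    have h := (lp.memℓp w).summable (by norm_num)
    have h2 : ((2 : ℝ≥0∞)).toReal = (2 : ℝ) := by norm_num
    rw [h2] at h
    refine h.congr fun i => ?_
    rw [← Real.rpow_natCast ‖w i‖ 2]; norm_num
  have hmain : Tendsto (fun t => ∑' i, g t i) (𝓝[>] (0 : ℝ)) (𝓝 0) := by
    have hlim : ∀ k : ℕ, Tendsto (fun t => g t k) (𝓝[>] (0 : ℝ)) (𝓝 0) := by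
      intro k
      apply Tendsto.congr' _ tendsto_const_nhds
      have hδ : 0 < -x k / (|w k| + 1) := div_pos (neg_pos.2 (hx k)) (by positivity)
      filter_upwards [Ioo_mem_nhdsGT_of_mem (Set.left_mem_Ico.2 hδ)] with t ht
      have hneg : x k + t * w k < 0 := by
        have h1 : t * w k ≤ t * |w k| :=
          mul_le_mul_of_nonneg_left (le_abs_self _) ht.1.le
        have h2 : t * (|w k| + 1) < -x k :=
          (lt_div_iff₀ (by positivity)).mp ht.2
        nlinarith [abs_nonneg (w k), ht.1]
      simp only [hgdef, hcoord t k, max_eq_right hneg.le, mul_zero, norm_zero]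
      norm_num
    have hbound : ∀ᶠ t in 𝓝[>] (0:ℝ), ∀ k : ℕ, ‖g t k‖ ≤ ‖w k‖ ^ 2 := by
      filter_upwards [self_mem_nhdsWithin] with t (ht : (0:ℝ) < t)
      intro k
      have hb : 0 ≤ t⁻¹ * max (x k + t * w k) 0 := by positivity
      have hub : t⁻¹ * max (x k + t * w k) 0 ≤ |w k| := by
        have h1 : max (x k + t * w k) 0 ≤ t * |w k| := by
          rcases le_or_gt (x k + t * w k) 0 with h | h
          · rw [max_eq_right h]; positivity
          · rw [max_eq_left h.le]
            nlinarith [hx k, le_abs_self (w k), ht]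
        calc t⁻¹ * max (x k + t * w k) 0 ≤ t⁻¹ * (t * |w k|) :=
              mul_le_mul_of_nonneg_left h1 (by positivity)
          _ = |w k| := by field_simp
      simp only [hgdef, hcoord t k, Real.norm_eq_abs, norm_norm]
      rw [abs_of_nonneg (by positivity), abs_of_nonneg hb]
      nlinarith [hb, hub, abs_nonneg (w k)]
    have h := tendsto_tsum_of_dominated_convergence (g := fun _ : ℕ => (0 : ℝ))
      hsum_bound hlim hbound
    simpa using h
  have hnormsq : Tendsto (fun t => ‖t⁻¹ • (P (x + t • w) - P x)‖ ^ 2)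
      (𝓝[>] (0 : ℝ)) (𝓝 0) := by
    refine hmain.congr fun t => ?_
    rw [norm_sq_eq_tsum']
  rw [tendsto_zero_iff_norm_tendsto_zero]
  have := (Real.continuous_sqrt.tendsto 0).comp hnormsq
  simp only [Function.comp_def, Real.sqrt_zero] at this
  refine this.congr fun t => ?_
  rw [Real.sqrt_sq (norm_nonneg _)]
end

section
/- Let 𝕂 = {x ∈ ℓ² : xᵢ ≥ 0 for all i ∈ ℕ} be the positive cone in ℓ² with metric projection P_𝕂, and let x ∈ ℓ² satisfy |xᵢ| > 0 for all i ∈ ℕ and xⱼ·x_k < 0 for at least one pair j, k ∈ ℕ. Then P_𝕂 is not Fréchet differentiable at x; that is, there is no continuous linear map A : ℓ² → ℓ² such that (P_𝕂(u) − P_𝕂(x) − A(u − x))/‖u − x‖ → 0 as u → x. -/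
open Filter Topology Metric Set

lemma aux_proj_coord
    (P : lp (fun _ : ℕ => ℝ) 2 → lp (fun _ : ℕ => ℝ) 2)
    (hP : ∀ x, (∀ i : ℕ, 0 ≤ P x i) ∧
      ∀ z : lp (fun _ : ℕ => ℝ) 2, (∀ i : ℕ, 0 ≤ z i) → ‖x - P x‖ ≤ ‖x - z‖)
    (y : lp (fun _ : ℕ => ℝ) 2) (i : ℕ) : P y i = max (y i) 0 := by
  have key : ∀ t : ℝ, 0 ≤ P y i + t → 2 * ((y i - P y i) * t) ≤ t ^ 2 := by
    intro t ht
    set s : lp (fun _ : ℕ => ℝ) 2 := lp.single 2 i t with hs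
    have hz : ∀ j : ℕ, 0 ≤ (P y + s) j := by
      intro j
      rw [lp.coeFn_add, Pi.add_apply]
      rcases eq_or_ne j i with rfl | hj
      · rw [lp.single_apply_self]; exact ht
      · rw [lp.single_apply_ne _ _ _ hj, add_zero]; exact (hP y).1 j
    have h1 := (hP y).2 _ hz
    have h2 : y - (P y + s) = (y - P y) - s := by abel
    rw [h2] at h1
    have h3 : ‖y - P y‖ ^ 2 ≤ ‖(y - P y) - s‖ ^ 2 := by
      exact pow_le_pow_left₀ (norm_nonneg _) h1 2
    have h4 : ‖(y - P y) - s‖ ^ 2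
        = ‖y - P y‖ ^ 2 - 2 * inner ℝ (y - P y) s + ‖s‖ ^ 2 :=
      norm_sub_sq_real _ _
    have h5 : (inner ℝ (y - P y) s : ℝ) = (y i - P y i) * t := by
      rw [hs, lp.inner_single_right, lp.coeFn_sub, Pi.sub_apply]
      simp [RCLike.inner_apply]
      ring
    have h6 : ‖s‖ = |t| := by
      rw [hs]
      simpa using lp.norm_single (p := 2) (E := fun _ : ℕ => ℝ) (by norm_num) (fun _ => t) i
    rw [h4, h5, h6] at h3
    nlinarith [sq_abs t]
  have hc0 : 0 ≤ P y i := (hP y).1 i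
  have hyc : y i ≤ P y i := by
    by_contra h
    push_neg at h
    have hk := key (y i - P y i) (by linarith)
    nlinarith
  rcases eq_or_lt_of_le hc0 with hc | hc
  · rw [← hc]; symm; rw [max_eq_right]; linarith [hc.symm ▸ hyc]
  · have hge : P y i ≤ y i := by
      by_contra h
      push_neg at h
      set t := max (y i - P y i) (-(P y i)) with htdef
      have ht1 : y i - P y i ≤ t := le_max_left _ _
      have ht2 : t < 0 := max_lt (by linarith) (by linarith)
      have hk := key t (by have := le_max_right (y i - P y i) (-(P y i)); linarith)
      nlinarith
    have : y i = P y i := le_antisymm hyc hge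
    rw [← this]; symm; exact max_eq_left (by linarith)

/-- The metric projection `P` onto the positive cone `𝕂` of `ℓ²` is not Fréchet
differentiable at any point `x` with all coordinates nonzero and at least two
coordinates of opposite signs. -/
theorem not_frechet_proj_positiveCone_lp2_mixed
    (P : lp (fun _ : ℕ => ℝ) 2 → lp (fun _ : ℕ => ℝ) 2)
    (hP : ∀ x, (∀ i : ℕ, 0 ≤ P x i) ∧
      ∀ z : lp (fun _ : ℕ => ℝ) 2, (∀ i : ℕ, 0 ≤ z i) → ‖x - P x‖ ≤ ‖x - z‖)
    (x : lp (fun _ : ℕ => ℝ) 2) (hx1 : ∀ i : ℕ, x i ≠ 0)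
    (hx2 : ∃ j k : ℕ, x j * x k < 0) :
    ¬ ∃ A : lp (fun _ : ℕ => ℝ) 2 →L[ℝ] lp (fun _ : ℕ => ℝ) 2,
      Filter.Tendsto (fun u => ‖u - x‖⁻¹ • (P u - P x - A (u - x)))
        (𝓝[≠] x) (𝓝 0) := by
  rintro ⟨A, hA⟩
  have hproj : ∀ (y : lp (fun _ : ℕ => ℝ) 2) (i : ℕ), P y i = max (y i) 0 :=
    aux_proj_coord P hP
  -- coordinate evaluation is 1-Lipschitz, hence continuous
  have hlip : ∀ n : ℕ, ∀ f g : lp (fun _ : ℕ => ℝ) 2, |f n - g n| ≤ ‖f - g‖ := by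
    intro n f g
    have := lp.norm_apply_le_norm (by norm_num : (2 : ENNReal) ≠ 0) (f - g) n
    rwa [lp.coeFn_sub, Pi.sub_apply, Real.norm_eq_abs] at this
  have hcont : ∀ n : ℕ, Continuous (fun f : lp (fun _ : ℕ => ℝ) 2 => f n) := by
    intro n
    refine (LipschitzWith.of_dist_le_mul (K := 1) fun f g => ?_).continuous
    rw [Real.dist_eq, NNReal.coe_one, one_mul, dist_eq_norm]
    exact hlip n f g
  have hnormsingle : ∀ (n : ℕ) (t : ℝ),
      ‖(lp.single 2 n t : lp (fun _ : ℕ => ℝ) 2)‖ = |t| := by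
    intro n t
    simpa using lp.norm_single (p := 2) (E := fun _ : ℕ => ℝ) (by norm_num) (fun _ => t) n
  have hsingle_smul : ∀ (n : ℕ) (t : ℝ),
      (lp.single 2 n t : lp (fun _ : ℕ => ℝ) 2) = t • lp.single 2 n (1 : ℝ) := by
    intro n t
    rw [← lp.single_smul, smul_eq_mul, mul_one]
  -- Step B : the diagonal entries of A are determined
  have hB : ∀ n : ℕ, (A (lp.single 2 n 1)) n = if 0 < x n then (1 : ℝ) else 0 := by
    intro n
    set a : ℝ := (A (lp.single 2 n 1)) n with ha
    set τ : ℝ := if 0 < x n then 1 else 0 with hτ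
    have hφ : Tendsto (fun t : ℝ => x + lp.single 2 n t) (𝓝[≠] 0) (𝓝[≠] x) := by
      rw [tendsto_nhdsWithin_iff]
      constructor
      · rw [tendsto_iff_dist_tendsto_zero]
        have : ∀ t : ℝ, dist (x + lp.single 2 n t) x = |t| := by
          intro t
          rw [dist_eq_norm, add_sub_cancel_left, hnormsingle]
        simp only [this]
        exact (continuous_abs.tendsto' 0 0 (abs_zero)).mono_left nhdsWithin_le_nhds
      · filter_upwards [self_mem_nhdsWithin] with t ht
        simp only [mem_compl_iff, mem_singleton_iff] at ht ⊢
        intro hcontra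
        apply ht
        have := congrArg (fun f : lp (fun _ : ℕ => ℝ) 2 => f n) hcontra
        simp only [lp.coeFn_add, Pi.add_apply, lp.single_apply_self] at this
        linarith
    have h1 := hA.comp hφ
    have h2 := ((hcont n).tendsto 0).comp h1
    simp only [lp.coeFn_zero, Pi.zero_apply] at h2
    have h3 := h2.abs
    rw [abs_zero] at h3
    have heq : ∀ᶠ t in 𝓝[≠] (0:ℝ),
        |(fun f : lp (fun _ : ℕ => ℝ) 2 => f n)
          ((fun u => ‖u - x‖⁻¹ • (P u - P x - A (u - x)))
            ((fun t : ℝ => x + lp.single 2 n t) t))| = |τ - a| := by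
      have hball : Metric.ball (0:ℝ) |x n| ∈ 𝓝 (0:ℝ) :=
        Metric.ball_mem_nhds 0 (abs_pos.2 (hx1 n))
      filter_upwards [nhdsWithin_le_nhds hball, self_mem_nhdsWithin] with t htb htne
      simp only [mem_compl_iff, mem_singleton_iff] at htne
      rw [Metric.mem_ball, Real.dist_eq, sub_zero] at htb
      have hsub : (x + lp.single 2 n t) - x = (lp.single 2 n t : lp (fun _ : ℕ => ℝ) 2) :=
        add_sub_cancel_left x _
      have hAcoord : (A (lp.single 2 n t)) n = t * a := by
        rw [hsingle_smul n t, map_smul, lp.coeFn_smul, Pi.smul_apply, smul_eq_mul, ha]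
      have hPcoord : (P (x + lp.single 2 n t)) n - (P x) n = τ * t := by
        rw [hproj, hproj]
        have hcoord : (x + lp.single 2 n t : lp (fun _ : ℕ => ℝ) 2) n = x n + t := by
          rw [lp.coeFn_add, Pi.add_apply, lp.single_apply_self]
        rw [hcoord, hτ]
        rcases lt_or_gt_of_ne (hx1 n) with hneg | hpos
        · rw [abs_of_neg hneg] at htb
          obtain ⟨ht1, ht2⟩ := abs_lt.1 htb
          rw [if_neg (not_lt.2 hneg.le)]
          have hle : x n + t ≤ 0 := by linarith
          rw [max_eq_right hle, max_eq_right hneg.le]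
          ring
        · rw [abs_of_pos hpos] at htb
          obtain ⟨ht1, ht2⟩ := abs_lt.1 htb
          rw [if_pos hpos]
          have hle : 0 ≤ x n + t := by linarith
          rw [max_eq_left hle, max_eq_left hpos.le]
          ring
      rw [hsub, lp.coeFn_smul, Pi.smul_apply, smul_eq_mul, lp.coeFn_sub, Pi.sub_apply,
        lp.coeFn_sub, Pi.sub_apply, hnormsingle]
      have : (P (x + lp.single 2 n t)) n - (P x) n - (A (lp.single 2 n t)) n
          = t * (τ - a) := by rw [hAcoord]; nlinarith [hPcoord]
      rw [this, abs_mul, abs_mul, abs_inv, abs_abs, ← mul_assoc,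
        inv_mul_cancel₀ (abs_ne_zero.2 htne), one_mul]
    have h4 : Tendsto (fun _ : ℝ => |τ - a|) (𝓝[≠] (0:ℝ)) (𝓝 0) := by
      exact Tendsto.congr' (by filter_upwards [heq] with t ht using ht) h3
    have h5 : |τ - a| = 0 := tendsto_nhds_unique tendsto_const_nhds h4
    have h6 : τ = a := by rwa [abs_eq_zero, sub_eq_zero] at h5
    exact h6.symm
  -- coordinates of x tend to 0
  have hx0 : Tendsto (fun m : ℕ => |x m|) atTop (𝓝 0) := by
    have hs : Summable (fun i : ℕ => ‖x i‖ ^ (2 : ENNReal).toReal) :=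
      (lp.memℓp x).summable (by norm_num)
    have hs2 : Summable (fun i : ℕ => |x i| ^ (2 : ℝ)) := by
      have h2r : ((2 : ENNReal)).toReal = (2 : ℝ) := by norm_num
      simpa [Real.norm_eq_abs, h2r] using hs
    have h1 := hs2.tendsto_atTop_zero
    have h2 := (Real.continuous_sqrt.tendsto 0).comp h1
    rw [Real.sqrt_zero] at h2
    refine h2.congr fun m => ?_
    simp only [Function.comp]
    rw [show |x m| ^ (2:ℝ) = |x m| ^ (2:ℕ) from by
      rw [← Real.rpow_natCast]; norm_num]
    exact Real.sqrt_sq (abs_nonneg _)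
  -- Step C : flip each coordinate
  set u : ℕ → lp (fun _ : ℕ => ℝ) 2 := fun m => x + lp.single 2 m (-2 * x m) with hu
  have husub : ∀ m : ℕ, u m - x = (lp.single 2 m (-2 * x m) : lp (fun _ : ℕ => ℝ) 2) :=
    fun m => add_sub_cancel_left x _
  have hunorm : ∀ m : ℕ, ‖u m - x‖ = 2 * |x m| := by
    intro m
    rw [husub, hnormsingle, abs_mul]
    norm_num
  have hune : ∀ m : ℕ, u m ≠ x := by
    intro m h
    have := congrArg (fun f : lp (fun _ : ℕ => ℝ) 2 => f m) h
    simp only [hu, lp.coeFn_add, Pi.add_apply, lp.single_apply_self] at this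
    exact hx1 m (by linarith)
  have hulim : Tendsto u atTop (𝓝[≠] x) := by
    rw [tendsto_nhdsWithin_iff]
    constructor
    · rw [tendsto_iff_dist_tendsto_zero]
      have hd : ∀ m : ℕ, dist (u m) x = 2 * |x m| := by
        intro m; rw [dist_eq_norm, hunorm]
      simp only [hd]
      have := hx0.const_mul (2:ℝ)
      simpa using this
    · exact Filter.Eventually.of_forall fun m => hune m
  have hw := hA.comp hulim
  have hwnorm := hw.norm
  rw [norm_zero] at hwnorm
  have hlb : ∀ m : ℕ, (1:ℝ)/2 ≤ ‖‖u m - x‖⁻¹ • (P (u m) - P x - A (u m - x))‖ := by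
    intro m
    have hcoordle := lp.norm_apply_le_norm (by norm_num : (2 : ENNReal) ≠ 0)
      (‖u m - x‖⁻¹ • (P (u m) - P x - A (u m - x))) m
    refine le_trans ?_ hcoordle
    rw [Real.norm_eq_abs, lp.coeFn_smul, Pi.smul_apply, smul_eq_mul,
      lp.coeFn_sub, Pi.sub_apply, lp.coeFn_sub, Pi.sub_apply]
    have hAc : (A (u m - x)) m = (-2 * x m) * ((A (lp.single 2 m 1)) m) := by
      rw [husub, hsingle_smul m (-2 * x m), map_smul, lp.coeFn_smul, Pi.smul_apply,
        smul_eq_mul]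
    have hPum : (P (u m)) m = max (-(x m)) 0 := by
      rw [hproj]
      have : (u m) m = -(x m) := by
        simp only [hu, lp.coeFn_add, Pi.add_apply, lp.single_apply_self]
        ring
      rw [this]
    have hPxm : (P x) m = max (x m) 0 := hproj x m
    rw [hunorm, hAc, hPum, hPxm, hB m]
    have hpos0 : 0 < |x m| := abs_pos.2 (hx1 m)
    have hgen : ∀ s : ℝ, s = x m ∨ s = -(x m) → (1:ℝ)/2 ≤ |(2 * |x m|)⁻¹ * s| := by
      intro s hs
      have habs : |s| = |x m| := by
        rcases hs with rfl | rfl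
        · rfl
        · exact abs_neg _
      rw [abs_mul, abs_inv, abs_mul, abs_abs, abs_two, habs, inv_mul_eq_div,
        le_div_iff₀ (by linarith)]
      linarith
    rcases lt_or_gt_of_ne (hx1 m) with hneg | hpos
    · rw [if_neg (not_lt.2 hneg.le),
        max_eq_left (by linarith : (0:ℝ) ≤ -(x m)), max_eq_right hneg.le]
      exact hgen _ (Or.inr (by ring))
    · rw [if_pos hpos,
        max_eq_right (by linarith : -(x m) ≤ (0:ℝ)), max_eq_left hpos.le]
      exact hgen _ (Or.inl (by ring))
  have hev : ∀ᶠ m : ℕ in atTop,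
      ‖‖u m - x‖⁻¹ • (P (u m) - P x - A (u m - x))‖ < 1/2 :=
    hwnorm.eventually (gt_mem_nhds (by norm_num : (0:ℝ) < 1/2))
  obtain ⟨m, hm⟩ := hev.exists
  exact absurd (hlb m) (not_le.2 hm)
end
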